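/- Let x0 ≥ 1 and f : [x0, ∞) → ℝ be twice continuously differentiable with f, f', f'' > 0 and f''(x)/2 ≤ f''(y) ≤ f''(x) for x0 ≤ x ≤ y ≤ 2x. Let λ, r, T ≥ 0 be integers, A ≥ 2x0, and a ≤ b integers with [a,b) ⊆ [A, 2A]. Then the number of integers n ∈ [a,b) such that s(⌊f(n+ℓ)⌋) − s(⌊f(n+ℓ+r)⌋) ≠ s_λ(⌊f(n+ℓ)⌋) − s_λ(⌊f(n+ℓ+r)⌋) for some ℓ ∈ {0,…,T−1} is O((r+T)·((b−a)·f'(A)·2^{−λ} + 1)), with an absolute implied constant. -/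

import Mathlib

/-- The binary sum-of-digits function. -/
def binDigitSum (n : ℕ) : ℕ := (Nat.digits 2 n).sum

/-- The truncated binary sum-of-digits function. -/
def truncDigitSum (lam : ℕ) (n : ℕ) : ℕ := binDigitSum (n % 2 ^ lam)

lemma binDigitSum_rec (n : ℕ) : binDigitSum n = n % 2 + binDigitSum (n / 2) := by
  rcases Nat.eq_zero_or_pos n with h | h
  · simp [h, binDigitSum]
  · rw [binDigitSum, Nat.digits_def' (by norm_num : (1:ℕ) < 2) h]
    simp [binDigitSum]

lemma binDigitSum_split (lam m : ℕ) :
    binDigitSum m = truncDigitSum lam m + binDigitSum (m / 2 ^ lam) := by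
  induction lam generalizing m with
  | zero => simp [truncDigitSum, binDigitSum, Nat.mod_one]
  | succ k ih =>
    have h1 : m % 2 ^ (k+1) % 2 = m % 2 := Nat.mod_mod_of_dvd _ ⟨2^k, by ring⟩
    have h2 : m % 2 ^ (k+1) / 2 = m / 2 % 2 ^ k := by
      rw [pow_succ']
      exact Nat.mod_mul_right_div_self m 2 (2^k)
    have h3 : m / 2 / 2 ^ k = m / 2 ^ (k+1) := by
      rw [Nat.div_div_eq_div_mul, ← pow_succ']
    rw [binDigitSum_rec m, ih (m/2)]
    simp only [truncDigitSum]
    rw [binDigitSum_rec (m % 2^(k+1)), h1, h2, h3]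
    ring

lemma count_le (S : Finset ℕ) (P : ℕ → Prop) [DecidablePred P] (g : ℕ → ℕ) (R : ℕ)
    (h : ∀ n ∈ S, P n → g n + 1 ≤ g (n + R)) (hm : ∀ n ∈ S, g n ≤ g (n + R)) :
    ((S.filter P).card : ℝ) ≤ ∑ n ∈ S, ((g (n + R) : ℝ) - g n) := by
  calc ((S.filter P).card : ℝ) = ∑ _n ∈ S.filter P, (1:ℝ) := by simp
    _ ≤ ∑ n ∈ S.filter P, ((g (n + R) : ℝ) - g n) := by
        apply Finset.sum_le_sum
        intro n hn
        obtain ⟨hnS, hPn⟩ := Finset.mem_filter.mp hn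
        have h1 : (g n : ℝ) + 1 ≤ g (n + R) := by exact_mod_cast h n hnS hPn
        linarith
    _ ≤ ∑ n ∈ S, ((g (n + R) : ℝ) - g n) := by
        apply Finset.sum_le_sum_of_subset_of_nonneg (Finset.filter_subset _ _)
        intro n hn _
        have h1 : (g n : ℝ) ≤ g (n + R) := by exact_mod_cast hm n hn
        linarith

lemma telescope (g : ℕ → ℝ) (a b R : ℕ) (hab : a ≤ b) :
    ∑ n ∈ Finset.Ico a b, (g (n + R) - g n) =
      ∑ m ∈ Finset.Ico b (b + R), g m - ∑ m ∈ Finset.Ico a (a + R), g m := by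
  rw [Finset.sum_sub_distrib]
  have e1 : ∑ n ∈ Finset.Ico a b, g (n + R) = ∑ m ∈ Finset.Ico (a + R) (b + R), g m := by
    rw [Finset.sum_Ico_eq_sum_range, Finset.sum_Ico_eq_sum_range]
    have h : b + R - (a + R) = b - a := by omega
    rw [h]
    exact Finset.sum_congr rfl fun i _ => by rw [show a + i + R = a + R + i by omega]
  have e2 := Finset.sum_Ico_consecutive g (Nat.le_add_right a R)
    (by omega : a + R ≤ b + R)
  have e3 := Finset.sum_Ico_consecutive g hab (Nat.le_add_right b R)
  rw [e1]
  linarith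


lemma slope_bound (x0 : ℝ) (f f' f'' : ℝ → ℝ)
    (hx0 : 1 ≤ x0)
    (hf : ∀ x ∈ Set.Ici x0, HasDerivAt f (f' x) x)
    (hf' : ∀ x ∈ Set.Ici x0, HasDerivAt f' (f'' x) x)
    (hpos : ∀ x ∈ Set.Ici x0, 0 < f x ∧ 0 < f' x ∧ 0 < f'' x)
    (hreg : ∀ x y : ℝ, x0 ≤ x → x ≤ y → y ≤ 2 * x → f'' x / 2 ≤ f'' y ∧ f'' y ≤ f'' x)
    (A u v : ℝ) (hA : 2 * x0 ≤ A) (hAu : A ≤ u) (huv : u < v) (hv3A : v ≤ 3 * A) :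
    f v - f u ≤ 5 * f' A * (v - u) := by
  have hx0A : x0 ≤ A := by linarith
  have hx0u : x0 ≤ u := le_trans hx0A hAu
  have contf : ContinuousOn f (Set.Ici x0) :=
    fun x hx => (hf x hx).continuousAt.continuousWithinAt
  have contf' : ContinuousOn f' (Set.Ici x0) :=
    fun x hx => (hf' x hx).continuousAt.continuousWithinAt
  -- MVT for f on [u, v]
  obtain ⟨c1, hc1, hc1eq⟩ := exists_hasDerivAt_eq_slope f f' huv
    (contf.mono (fun x hx => le_trans hx0u hx.1))
    (fun x hx => hf x (le_trans hx0u hx.1.le))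
  -- MVT for f' on [A, c1]
  have hAc1 : A < c1 := lt_of_le_of_lt hAu hc1.1
  obtain ⟨c2, hc2, hc2eq⟩ := exists_hasDerivAt_eq_slope f' f'' hAc1
    (contf'.mono (fun x hx => le_trans hx0A hx.1))
    (fun x hx => hf' x (le_trans hx0A hx.1.le))
  -- MVT for f' on [A/2, A]
  have hx0A2 : x0 ≤ A/2 := by linarith
  have hhalf : A/2 < A := by linarith
  obtain ⟨c3, hc3, hc3eq⟩ := exists_hasDerivAt_eq_slope f' f'' hhalf
    (contf'.mono (fun x hx => le_trans hx0A2 hx.1))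
    (fun x hx => hf' x (le_trans hx0A2 hx.1.le))
  have hApos : (0:ℝ) < A := by linarith
  -- f'' A * A ≤ 2 f' A
  have hc3slope : f' A - f' (A/2) = f'' c3 * (A - A/2) := by
    have h := hc3eq
    rw [eq_div_iff (by linarith : A - A/2 ≠ 0)] at h
    linarith
  have hc3A : f'' A ≤ f'' c3 :=
    (hreg c3 A (by linarith [hc3.1]) hc3.2.le (by linarith [hc3.1])).2
  have hfA2pos : 0 < f' (A/2) := (hpos _ hx0A2).2.1
  have hB2 : f'' A * A ≤ 2 * f' A := by nlinarith [hc3slope, hc3A, hfA2pos, hApos]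
  -- f'' c2 ≤ f'' A
  have hc2x0 : x0 ≤ c2 := le_trans hx0A hc2.1.le
  have hc2N : c2 ≤ 3 * A := by linarith [hc2.2, hc1.2]
  have hB1 : f'' c2 ≤ f'' A := by
    by_cases h : c2 ≤ 2 * A
    · exact (hreg A c2 hx0A hc2.1.le h).2
    · push_neg at h
      have h1 : f'' c2 ≤ f'' (2 * A) := (hreg (2*A) c2 (by linarith) h.le (by linarith)).2
      have h2 : f'' (2 * A) ≤ f'' A := (hreg A (2*A) hx0A (by linarith) (by linarith)).2
      linarith
  -- f' c1 ≤ 5 f' A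
  have hc2slope : f' c1 - f' A = f'' c2 * (c1 - A) := by
    have h := hc2eq
    rw [eq_div_iff (by linarith : c1 - A ≠ 0)] at h
    linarith
  have hf''c2nn : 0 ≤ f'' c2 := (hpos c2 hc2x0).2.2.le
  have hc1N : c1 ≤ 3 * A := by linarith [hc1.2]
  have hf'c1 : f' c1 ≤ 5 * f' A := by nlinarith [hc2slope, hB1, hB2, hf''c2nn, hApos]
  -- conclude
  have hc1slope : f v - f u = f' c1 * (v - u) := by
    have h := hc1eq
    rw [eq_div_iff (by linarith : v - u ≠ 0)] at h
    linarith
  have hf'c1nn : 0 ≤ f' c1 := (hpos c1 (le_trans hx0u hc1.1.le)).2.1.le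
  nlinarith [hc1slope, hf'c1, hf'c1nn, huv]


lemma nat_div_upper (x : ℝ) (lam : ℕ) (hx : 0 ≤ x) :
    ((Nat.floor x / 2 ^ lam : ℕ) : ℝ) ≤ x / 2 ^ lam := by
  have h1 : ((Nat.floor x / 2 ^ lam : ℕ) : ℝ)
      ≤ (Nat.floor x : ℝ) / ((2 ^ lam : ℕ) : ℝ) := Nat.cast_div_le
  push_cast at h1
  have h2 : (Nat.floor x : ℝ) ≤ x := Nat.floor_le hx
  have h3 : (0:ℝ) < 2 ^ lam := by positivity
  calc ((Nat.floor x / 2 ^ lam : ℕ) : ℝ) ≤ (Nat.floor x : ℝ) / 2 ^ lam := h1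
    _ ≤ x / 2 ^ lam := by gcongr

lemma nat_div_lower (x : ℝ) (lam : ℕ) :
    x / 2 ^ lam - 2 ≤ ((Nat.floor x / 2 ^ lam : ℕ) : ℝ) := by
  have h2lam : (0:ℝ) < 2 ^ lam := by positivity
  have h1lam : (1:ℝ) ≤ 2 ^ lam := by exact_mod_cast Nat.one_le_two_pow (n := lam)
  have h1 : Nat.floor x < 2 ^ lam * (Nat.floor x / 2 ^ lam) + 2 ^ lam := by
    have hdm := Nat.div_add_mod (Nat.floor x) (2 ^ lam)
    have hmlt : Nat.floor x % 2 ^ lam < 2 ^ lam := Nat.mod_lt _ (by positivity)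
    omega
  have h2 : (Nat.floor x : ℝ) <
      2 ^ lam * ((Nat.floor x / 2 ^ lam : ℕ) : ℝ) + 2 ^ lam := by exact_mod_cast h1
  have hfl : x - 1 < (Nat.floor x : ℝ) := Nat.sub_one_lt_floor _
  rw [sub_le_iff_le_add, div_le_iff₀ h2lam]
  have hexp : (((Nat.floor x / 2 ^ lam : ℕ) : ℝ) + 2) * 2 ^ lam
      = 2 ^ lam * ((Nat.floor x / 2 ^ lam : ℕ) : ℝ) + 2 ^ lam + 2 ^ lam := by ring
  linarith

theorem stmt_10 :
    ∃ C : ℝ, 0 < C ∧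
      ∀ (x0 : ℝ) (f f' f'' : ℝ → ℝ) (lam r T A a b : ℕ),
        1 ≤ x0 →
        (∀ x ∈ Set.Ici x0, HasDerivAt f (f' x) x) →
        (∀ x ∈ Set.Ici x0, HasDerivAt f' (f'' x) x) →
        ContinuousOn f'' (Set.Ici x0) →
        (∀ x ∈ Set.Ici x0, 0 < f x ∧ 0 < f' x ∧ 0 < f'' x) →
        (∀ x y : ℝ, x0 ≤ x → x ≤ y → y ≤ 2 * x → f'' x / 2 ≤ f'' y ∧ f'' y ≤ f'' x) →
        2 * x0 ≤ (A : ℝ) →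
        a ≤ b → (A : ℝ) ≤ a → (b : ℝ) ≤ 2 * A + 1 →
        (((Finset.Ico a b).filter (fun n : ℕ => ∃ ℓ < T,
            (binDigitSum (Nat.floor (f ((n + ℓ : ℕ) : ℝ))) : ℤ) - binDigitSum (Nat.floor (f ((n + ℓ + r : ℕ) : ℝ))) ≠
              (truncDigitSum lam (Nat.floor (f ((n + ℓ : ℕ) : ℝ))) : ℤ) -
                truncDigitSum lam (Nat.floor (f ((n + ℓ + r : ℕ) : ℝ))))).card : ℝ) ≤
          C * ((r + T) * ((b - a : ℝ) * f' A / 2 ^ lam + 1)) := by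
  refine ⟨14, by norm_num, ?_⟩
  intro x0 f f' f'' lam r T A a b hx0 hf hf' hf''c hpos hreg hA hab hAa hb2A
  have hx0A : x0 ≤ (A : ℝ) := by linarith
  have hx0a : x0 ≤ (a : ℝ) := le_trans hx0A hAa
  have hfA' : 0 < f' A := (hpos A hx0A).2.1
  have hba : (a:ℝ) ≤ b := by exact_mod_cast hab
  have h2lam : (0:ℝ) < 2 ^ lam := by positivity
  have hxnn : (0:ℝ) ≤ (b - a : ℝ) * f' A / 2 ^ lam :=
    div_nonneg (mul_nonneg (by linarith) hfA'.le) h2lam.le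
  have hxpos : (0:ℝ) ≤ (b - a : ℝ) * f' A / 2 ^ lam + 1 := by linarith
  rcases Nat.eq_zero_or_pos T with hT0 | hT
  · subst hT0
    rw [Finset.filter_false_of_mem (fun n _ h => by
      obtain ⟨ℓ, hℓ, _⟩ := h; exact absurd hℓ (Nat.not_lt_zero ℓ))]
    simp only [Finset.card_empty, Nat.cast_zero]
    have := mul_nonneg (by positivity : (0:ℝ) ≤ (r:ℝ) + 0) hxpos
    linarith
  -- main case: T ≥ 1
  set R := r + T with hRdef
  have hR1 : 1 ≤ R := by omega
  have hRcast : (R:ℝ) = (r:ℝ) + T := by rw [hRdef]; push_cast; ring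
  have hR0 : (0:ℝ) ≤ R := by positivity
  have hRR : (1:ℝ) ≤ R := by exact_mod_cast hR1
  set F : ℕ → ℕ := fun n => Nat.floor (f n) / 2 ^ lam with hFdef
  have contf : ContinuousOn f (Set.Ici x0) :=
    fun x hx => (hf x hx).continuousAt.continuousWithinAt
  have contf' : ContinuousOn f' (Set.Ici x0) :=
    fun x hx => (hf' x hx).continuousAt.continuousWithinAt
  have monoF : MonotoneOn f (Set.Ici x0) := by
    apply (strictMonoOn_of_deriv_pos (convex_Ici x0) contf ?_).monotoneOn
    intro x hx
    rw [interior_Ici] at hx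
    rw [(hf x (Set.mem_Ici.mpr (le_of_lt (Set.mem_Ioi.mp hx)))).deriv]
    exact (hpos x (Set.mem_Ici.mpr (le_of_lt (Set.mem_Ioi.mp hx)))).2.1
  have hFmono : ∀ m n : ℕ, a ≤ m → m ≤ n → F m ≤ F n := by
    intro m n ham hmn
    apply Nat.div_le_div_right
    apply Nat.floor_le_floor
    have h1 : x0 ≤ (m:ℝ) := le_trans hx0a (by exact_mod_cast ham)
    have h2 : (m:ℝ) ≤ (n:ℝ) := by exact_mod_cast hmn
    exact monoF h1 (le_trans h1 h2) h2
  have key : ∀ n, a ≤ n → (∃ ℓ < T,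
      (binDigitSum (Nat.floor (f ((n + ℓ : ℕ) : ℝ))) : ℤ) - binDigitSum (Nat.floor (f ((n + ℓ + r : ℕ) : ℝ))) ≠
        (truncDigitSum lam (Nat.floor (f ((n + ℓ : ℕ) : ℝ))) : ℤ) -
          truncDigitSum lam (Nat.floor (f ((n + ℓ + r : ℕ) : ℝ)))) → F n + 1 ≤ F (n + R) := by
    rintro n han ⟨ℓ, hℓ, hne⟩
    have hdne : F (n + ℓ) ≠ F (n + ℓ + r) := by
      intro hEq
      apply hne
      have hEq' : Nat.floor (f ((n + ℓ : ℕ) : ℝ)) / 2 ^ lam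
          = Nat.floor (f ((n + ℓ + r : ℕ) : ℝ)) / 2 ^ lam := hEq
      have h1 := binDigitSum_split lam (Nat.floor (f ((n + ℓ : ℕ) : ℝ)))
      have h2 := binDigitSum_split lam (Nat.floor (f ((n + ℓ + r : ℕ) : ℝ)))
      rw [← hEq'] at h2
      omega
    have l1 : F n ≤ F (n + ℓ) := hFmono n (n+ℓ) han (Nat.le_add_right _ _)
    have l2 : F (n + ℓ) ≤ F (n + ℓ + r) := hFmono _ _ (by omega) (Nat.le_add_right _ _)
    have l3 : F (n + ℓ + r) ≤ F (n + R) := hFmono _ _ (by omega) (by omega)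
    omega
  have cardle := count_le (Finset.Ico a b) _ F R
    (fun n hn hPn => key n (Finset.mem_Ico.mp hn).1 hPn)
    (fun n hn => hFmono n (n + R) (Finset.mem_Ico.mp hn).1 (Nat.le_add_right _ _))
  have tel := telescope (fun m => (F m : ℝ)) a b R hab
  -- A ≥ 2 as a natural number
  have hA2 : (2:ℝ) ≤ A := by linarith
  have hb1 : 1 ≤ b := by
    have h1 : (1:ℝ) ≤ b := by linarith
    exact_mod_cast h1
  set N := b - 1 + R with hNdef
  have hNcast : (N:ℝ) = (b:ℝ) - 1 + R := by
    rw [hNdef, Nat.cast_add, Nat.cast_sub hb1]; norm_num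
  have sumb : ∑ m ∈ Finset.Ico b (b + R), ((F m : ℝ)) ≤ R * (F N : ℝ) := by
    have hbd : ∀ m ∈ Finset.Ico b (b + R), ((F m : ℝ)) ≤ (F N : ℝ) := by
      intro m hm
      obtain ⟨h1, h2⟩ := Finset.mem_Ico.mp hm
      have ham : a ≤ m := le_trans hab h1
      have : F m ≤ F N := hFmono m N ham (by omega)
      exact_mod_cast this
    calc ∑ m ∈ Finset.Ico b (b + R), ((F m : ℝ))
        ≤ (Finset.Ico b (b + R)).card • (F N : ℝ) := Finset.sum_le_card_nsmul _ _ _ hbd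
      _ = R * (F N : ℝ) := by rw [Nat.card_Ico, Nat.add_sub_cancel_left, nsmul_eq_mul]
  have suma : (R:ℝ) * (F a : ℝ) ≤ ∑ m ∈ Finset.Ico a (a + R), ((F m : ℝ)) := by
    have hbd : ∀ m ∈ Finset.Ico a (a + R), (F a : ℝ) ≤ ((F m : ℝ)) := by
      intro m hm
      obtain ⟨h1, h2⟩ := Finset.mem_Ico.mp hm
      have : F a ≤ F m := hFmono a m le_rfl h1
      exact_mod_cast this
    calc (R:ℝ) * (F a : ℝ) = (Finset.Ico a (a + R)).card • (F a : ℝ) := by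
          rw [Nat.card_Ico, Nat.add_sub_cancel_left, nsmul_eq_mul]
      _ ≤ ∑ m ∈ Finset.Ico a (a + R), ((F m : ℝ)) := Finset.card_nsmul_le_sum _ _ _ hbd
  have main1 : (((Finset.Ico a b).filter (fun n : ℕ => ∃ ℓ < T,
      (binDigitSum (Nat.floor (f ((n + ℓ : ℕ) : ℝ))) : ℤ) - binDigitSum (Nat.floor (f ((n + ℓ + r : ℕ) : ℝ))) ≠
        (truncDigitSum lam (Nat.floor (f ((n + ℓ : ℕ) : ℝ))) : ℤ) -
          truncDigitSum lam (Nat.floor (f ((n + ℓ + r : ℕ) : ℝ))))).card : ℝ) ≤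
      R * ((F N : ℝ) - (F a : ℝ)) := by
    calc _ ≤ ∑ n ∈ Finset.Ico a b, ((F (n + R) : ℝ) - F n) := cardle
      _ = ∑ m ∈ Finset.Ico b (b + R), ((F m : ℝ)) - ∑ m ∈ Finset.Ico a (a + R), ((F m : ℝ)) := tel
      _ ≤ R * ((F N : ℝ) - (F a : ℝ)) := by linarith
  by_cases hcase : b ≤ a + R
  · -- small interval
    refine le_trans (Nat.cast_le.mpr (Finset.card_filter_le _ _)) ?_
    have hcard : ((Finset.Ico a b).card : ℝ) ≤ (R:ℝ) := by
      rw [Nat.card_Ico]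
      exact_mod_cast (by omega : b - a ≤ R)
    refine le_trans hcard ?_
    rw [← hRcast]
    linarith [mul_nonneg hR0 hxnn, hR0]
  · -- large interval: analytic bounds
    push_neg at hcase
    have hcasR : (a:ℝ) + R + 1 ≤ b := by exact_mod_cast hcase
    have hN3A : (N:ℝ) ≤ 3 * A := by rw [hNcast]; linarith
    have haN : (a:ℝ) < N := by rw [hNcast]; linarith
    have hx0N : x0 ≤ (N:ℝ) := by linarith
    have hsl := slope_bound x0 f f' f'' hx0 hf hf' hpos hreg A a N hA hAa haN hN3A
    have hNa : (N:ℝ) - a ≤ 2 * ((b:ℝ) - a) := by rw [hNcast]; linarith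
    have hstep7 : f N - f a ≤ 10 * ((b:ℝ) - a) * f' A := by
      have h5 : (0:ℝ) ≤ 5 * f' A := by linarith
      have h1 : 5 * f' A * ((N:ℝ) - a) ≤ 5 * f' A * (2 * ((b:ℝ) - a)) :=
        mul_le_mul_of_nonneg_left hNa h5
      have h2 : 5 * f' A * (2 * ((b:ℝ) - a)) = 10 * ((b:ℝ) - a) * f' A := by ring
      linarith
    -- floor/division bounds
    have hfNpos : 0 < f N := (hpos N hx0N).1
    have h1lam : (1:ℝ) ≤ 2 ^ lam := by exact_mod_cast Nat.one_le_two_pow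
    have hgN : (F N : ℝ) ≤ f N / 2 ^ lam := by
      simp only [hFdef]
      exact nat_div_upper (f N) lam hfNpos.le
    have hga : f a / 2 ^ lam - 2 ≤ (F a : ℝ) := by
      simp only [hFdef]
      exact nat_div_lower (f a) lam
    -- final assembly
    refine le_trans main1 ?_
    have hdivs : f N / 2 ^ lam - (f a / 2 ^ lam - 2)
        = (f N - f a) / 2 ^ lam + 2 := by ring
    have hdiv : (f N - f a) / 2 ^ lam ≤ 10 * ((b:ℝ) - a) * f' A / 2 ^ lam := by gcongr
    have hdiff : (F N : ℝ) - F a ≤ 10 * ((b - a : ℝ) * f' A / 2 ^ lam) + 2 := by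
      have hx10 : 10 * ((b:ℝ) - a) * f' A / 2 ^ lam
          = 10 * ((b - a : ℝ) * f' A / 2 ^ lam) := by ring
      linarith [hgN, hga, hdiv]
    have hmul : (R:ℝ) * ((F N : ℝ) - F a)
        ≤ (R:ℝ) * (10 * ((b - a : ℝ) * f' A / 2 ^ lam) + 2) :=
      mul_le_mul_of_nonneg_left hdiff hR0
    rw [← hRcast]
    linarith [hmul, mul_nonneg hR0 hxnn, hR0]
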